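/- Let u₁, …, u_n be i.i.d. uniform on {0, 1, 2} and let N_k = #{j ∈ {1,…,n} : u_j = k} for k = 0, 1, 2. Then for every integer d ≥ 0, almost surely E[(N₀ − N₂)^{2d} | N₁] ≤ 2^d · d! · (n − N₁)^d. -/

import Mathlib

open MeasureTheory

/-- Number of coordinates of `u` equal to `k`. -/
def cnt3 (n : ℕ) (u : Fin n → Fin 3) (k : Fin 3) : ℕ :=
  (Finset.univ.filter fun j => u j = k).card

set_option maxHeartbeats 1000000

open Finset




lemma nk_aux (d : ℕ) : ∀ t, t ≤ d →
    Nat.choose (2*d) (2*(d-t)) * (Nat.factorial (d-t) * Nat.factorial (d-t) * Nat.factorial t)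
      ≤ 2^t * (Nat.factorial d * Nat.factorial d) := by
  intro t
  induction t with
  | zero => simp [Nat.choose_self]
  | succ t ih =>
    intro ht
    have ht' : t ≤ d := Nat.le_of_succ_le ht
    have ih' := ih ht'
    have hj : d - t = (d - (t+1)) + 1 := by omega
    set j := d - (t+1) with hjdef
    rw [hj] at ih'
    have h1 : Nat.choose (2*d) (2*j+1) * (2*j+1) = Nat.choose (2*d) (2*j) * (2*d - 2*j) :=
      Nat.choose_succ_right_eq _ _
    have h2 : Nat.choose (2*d) (2*j+1+1) * (2*j+1+1) = Nat.choose (2*d) (2*j+1) * (2*d - (2*j+1)) :=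
      Nat.choose_succ_right_eq _ _
    have e1 : 2*d - 2*j = 2*t+2 := by omega
    have e2 : 2*d - (2*j+1) = 2*t+1 := by omega
    rw [e1] at h1; rw [e2] at h2
    have hA : Nat.choose (2*d) (2*j) * ((2*t+2) * (2*t+1))
        = Nat.choose (2*d) (2*(j+1)) * ((2*j+2) * (2*j+1)) := by
      have : 2*(j+1) = 2*j+1+1 := by ring
      rw [this]
      nlinarith [h1, h2]
    -- goal : choose (2d) (2j) * (j! * j! * (t+1)!) ≤ 2^(t+1) * (d! * d!)
    have key : Nat.choose (2*d) (2*j) * (Nat.factorial j * Nat.factorial j * Nat.factorial (t+1))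
          * (2 * (2*t+1))
        ≤ 2^(t+1) * (Nat.factorial d * Nat.factorial d) * (2 * (2*t+1)) := by
      have hfj : Nat.factorial (j+1) = (j+1) * Nat.factorial j := Nat.factorial_succ j
      have hft : Nat.factorial (t+1) = (t+1) * Nat.factorial t := Nat.factorial_succ t
      calc Nat.choose (2*d) (2*j) * (Nat.factorial j * Nat.factorial j * Nat.factorial (t+1))
            * (2 * (2*t+1))
          = Nat.choose (2*d) (2*j) * ((2*t+2)*(2*t+1))
              * (Nat.factorial j * Nat.factorial j * Nat.factorial t) := by
            rw [hft]; ring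
        _ = Nat.choose (2*d) (2*(j+1)) * ((2*j+2)*(2*j+1))
              * (Nat.factorial j * Nat.factorial j * Nat.factorial t) := by rw [hA]
        _ ≤ Nat.choose (2*d) (2*(j+1)) * ((2*j+2)*(2*j+2))
              * (Nat.factorial j * Nat.factorial j * Nat.factorial t) := by
            have : (2*j+2)*(2*j+1) ≤ (2*j+2)*(2*j+2) := by nlinarith
            exact Nat.mul_le_mul_right _ (Nat.mul_le_mul_left _ this)
        _ = 4 * (Nat.choose (2*d) (2*(j+1))
              * (Nat.factorial (j+1) * Nat.factorial (j+1) * Nat.factorial t)) := by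
            rw [hfj]; ring
        _ ≤ 4 * (2^t * (Nat.factorial d * Nat.factorial d)) := Nat.mul_le_mul_left _ ih'
        _ ≤ 4 * (2^t * (Nat.factorial d * Nat.factorial d)) * (2*t+1) :=
            Nat.le_mul_of_pos_right _ (by omega)
        _ = 2^(t+1) * (Nat.factorial d * Nat.factorial d) * (2 * (2*t+1)) := by
            rw [pow_succ]; ring
    exact Nat.le_of_mul_le_mul_right key (by omega)

lemma nk (d j : ℕ) (h : j ≤ d) :
    Nat.choose (2*d) (2*j) * 2^j * Nat.factorial j
      ≤ 2^d * Nat.factorial d * Nat.choose d j := by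
  have h0 := nk_aux d (d - j) (Nat.sub_le d j)
  rw [show d - (d-j) = j by omega] at h0
  have hd : Nat.choose d j * Nat.factorial j * Nat.factorial (d-j) = Nat.factorial d :=
    Nat.choose_mul_factorial_mul_factorial h
  have key : Nat.choose (2*d) (2*j) * 2^j * Nat.factorial j
        * (Nat.factorial j * Nat.factorial (d-j))
      ≤ 2^d * Nat.factorial d * Nat.choose d j * (Nat.factorial j * Nat.factorial (d-j)) := by
    calc Nat.choose (2*d) (2*j) * 2^j * Nat.factorial j * (Nat.factorial j * Nat.factorial (d-j))
        = 2^j * (Nat.choose (2*d) (2*j) * (Nat.factorial j * Nat.factorial j * Nat.factorial (d-j))) := by ring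
      _ ≤ 2^j * (2^(d-j) * (Nat.factorial d * Nat.factorial d)) := Nat.mul_le_mul_left _ h0
      _ = 2^d * Nat.factorial d * Nat.factorial d := by
          rw [← mul_assoc, ← pow_add, show j + (d-j) = d by omega]; ring
      _ = 2^d * Nat.factorial d * Nat.choose d j * (Nat.factorial j * Nat.factorial (d-j)) := by
          rw [show 2^d * Nat.factorial d * Nat.choose d j * (Nat.factorial j * Nat.factorial (d-j))
              = 2^d * Nat.factorial d * (Nat.choose d j * Nat.factorial j * Nat.factorial (d-j)) by ring, hd]
  exact Nat.le_of_mul_le_mul_right key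
    (Nat.mul_pos (Nat.factorial_pos j) (Nat.factorial_pos (d-j)))

lemma sum_even_range (d : ℕ) (f : ℕ → ℝ) (hf : ∀ k, ¬ Even k → f k = 0) :
    ∑ k ∈ Finset.range (2*d+1), f k = ∑ j ∈ Finset.range (d+1), f (2*j) := by
  induction d with
  | zero => simp
  | succ d ih =>
    rw [show 2*(d+1)+1 = (2*d+1)+1+1 by ring, Finset.sum_range_succ, Finset.sum_range_succ,
      ih, hf (2*d+1) (by simp [Nat.even_add_one, parity_simps]),
      show 2*d+1+1 = 2*(d+1) by ring, Finset.sum_range_succ, Finset.sum_range_succ,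
      Finset.sum_range_succ]
    ring

lemma even_pow_sum (d : ℕ) (x : ℝ) :
    (x+1)^(2*d) + (x-1)^(2*d)
      = 2 * ∑ j ∈ Finset.range (d+1), (Nat.choose (2*d) (2*j) : ℝ) * x^(2*j) := by
  have h1 : (x+1)^(2*d) = ∑ k ∈ range (2*d+1), x^k * 1^(2*d-k) * (Nat.choose (2*d) k : ℝ) :=
    add_pow x 1 (2*d)
  have h2 : (x-1)^(2*d) = ∑ k ∈ range (2*d+1), x^k * (-1)^(2*d-k) * (Nat.choose (2*d) k : ℝ) := by
    rw [show x - 1 = x + (-1) by ring]; exact add_pow x (-1) (2*d)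
  rw [h1, h2, ← Finset.sum_add_distrib]
  have key : ∀ k ∈ range (2*d+1),
      x^k * 1^(2*d-k) * (Nat.choose (2*d) k : ℝ) + x^k * (-1)^(2*d-k) * (Nat.choose (2*d) k : ℝ)
        = (fun k => if Even k then 2 * ((Nat.choose (2*d) k : ℝ) * x^k) else 0) k := by
    intro k hk
    have hk' : k ≤ 2*d := by simpa using Nat.lt_succ_iff.mp (Finset.mem_range.mp hk)
    have hneg : ((-1:ℝ))^(2*d-k) = (-1)^k := by
      have : ((-1:ℝ))^(2*d-k) * (-1)^k = 1 := by
        rw [← pow_add, show 2*d-k+k = 2*d by omega, pow_mul]; norm_num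
      have h2 : ((-1:ℝ))^k * (-1)^k = 1 := by rw [← pow_add, ← two_mul, pow_mul]; norm_num
      calc ((-1:ℝ))^(2*d-k) = (-1)^(2*d-k) * ((-1)^k*(-1)^k) := by rw [h2]; ring
        _ = ((-1)^(2*d-k)*(-1)^k)*(-1)^k := by ring
        _ = (-1)^k := by rw [this]; ring
    rw [hneg]
    by_cases he : Even k
    · rw [he.neg_one_pow]; simp [he]; ring
    · rw [(Nat.not_even_iff_odd.mp he).neg_one_pow]; simp [he]
  rw [Finset.sum_congr rfl key, Finset.mul_sum]
  rw [sum_even_range d _ (fun k hk => by simp [hk])]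
  refine Finset.sum_congr rfl fun j hj => ?_
  simp []


noncomputable def sgn3 : Fin 3 → ℝ := fun a => if a = 0 then 1 else if a = 2 then -1 else 0

lemma cnt3_cons (n : ℕ) (a : Fin 3) (w : Fin n → Fin 3) (k : Fin 3) :
    cnt3 (n+1) (Fin.cons a w) k = (if a = k then 1 else 0) + cnt3 n w k := by
  unfold cnt3
  rw [Finset.card_filter, Finset.card_filter, Fin.sum_univ_succ]
  simp

lemma sgn3_cons (n : ℕ) (a : Fin 3) (w : Fin n → Fin 3) :
    ∑ j, sgn3 ((Fin.cons a w : Fin (n+1) → Fin 3) j) = sgn3 a + ∑ j, sgn3 (w j) := by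
  rw [Fin.sum_univ_succ]
  simp

lemma decomp3 (n m : ℕ) (F : (Fin (n+1) → Fin 3) → ℝ) :
    ∑ v ∈ univ.filter (fun v : Fin (n+1) → Fin 3 => cnt3 (n+1) v 1 = m), F v
      = (∑ w ∈ univ.filter (fun w : Fin n → Fin 3 => cnt3 n w 1 = m),
          (F (Fin.cons 0 w) + F (Fin.cons 2 w)))
        + ∑ w ∈ univ.filter (fun w : Fin n → Fin 3 => 1 + cnt3 n w 1 = m),
            F (Fin.cons 1 w) := by
  classical
  rw [Finset.sum_filter, Finset.sum_filter, Finset.sum_filter]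
  rw [← Equiv.sum_comp (Fin.consEquiv (fun _ => Fin 3))
      (fun v => if cnt3 (n+1) v 1 = m then F v else 0)]
  rw [Fintype.sum_prod_type]
  rw [Fin.sum_univ_three]
  simp only [show ∀ (a : Fin 3) (w : Fin n → Fin 3),
      (Fin.consEquiv (fun _ => Fin 3)) (a, w) = Fin.cons a w from fun _ _ => rfl]
  have c0 : ∀ w : Fin n → Fin 3, cnt3 (n+1) (Fin.cons 0 w) 1 = cnt3 n w 1 := by
    intro w; rw [cnt3_cons]; norm_num
  have c2 : ∀ w : Fin n → Fin 3, cnt3 (n+1) (Fin.cons 2 w) 1 = cnt3 n w 1 := by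
    intro w; rw [cnt3_cons]; norm_num; decide
  have c1 : ∀ w : Fin n → Fin 3, cnt3 (n+1) (Fin.cons 1 w) 1 = 1 + cnt3 n w 1 := by
    intro w; rw [cnt3_cons]; norm_num
  simp only [c0, c1, c2]
  have hsplit : ∀ w : Fin n → Fin 3,
      (if cnt3 n w 1 = m then F (Fin.cons 0 w) + F (Fin.cons 2 w) else 0)
        = (if cnt3 n w 1 = m then F (Fin.cons 0 w) else 0)
          + (if cnt3 n w 1 = m then F (Fin.cons 2 w) else 0) := by
    intro w; split_ifs <;> ring
  simp only [hsplit, Finset.sum_add_distrib]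
  ring

lemma pairsum (n d : ℕ) (A : Finset (Fin n → Fin 3)) :
    ∑ w ∈ A, (((∑ j, sgn3 (w j)) + 1)^(2*d) + ((∑ j, sgn3 (w j)) - 1)^(2*d))
      = 2 * ∑ k ∈ range (d+1), (Nat.choose (2*d) (2*k) : ℝ)
          * ∑ w ∈ A, (∑ j, sgn3 (w j))^(2*k) := by
  have h : ∀ w ∈ A, (((∑ j, sgn3 (w j)) + 1)^(2*d) + ((∑ j, sgn3 (w j)) - 1)^(2*d))
      = 2 * ∑ k ∈ range (d+1), (Nat.choose (2*d) (2*k) : ℝ) * (∑ j, sgn3 (w j))^(2*k) :=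
    fun w _ => even_pow_sum d _
  rw [Finset.sum_congr rfl h, ← Finset.mul_sum, Finset.sum_comm]
  congr 1
  refine Finset.sum_congr rfl fun k _ => ?_
  rw [Finset.mul_sum]

lemma term1_bound (n d m' : ℕ)
    (ih : ∀ k, k ≤ d → ∑ w ∈ univ.filter (fun w : Fin n → Fin 3 => cnt3 n w 1 = m'),
        (∑ j, sgn3 (w j))^(2*k)
      ≤ 2^k * (Nat.factorial k : ℝ) * ((n - m' : ℕ):ℝ)^k *
          (univ.filter (fun w : Fin n → Fin 3 => cnt3 n w 1 = m')).card) :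
    2 * ∑ k ∈ range (d+1), (Nat.choose (2*d) (2*k) : ℝ)
        * ∑ w ∈ univ.filter (fun w : Fin n → Fin 3 => cnt3 n w 1 = m'), (∑ j, sgn3 (w j))^(2*k)
      ≤ 2 * (2^d * (Nat.factorial d : ℝ) * (((n - m' : ℕ):ℝ) + 1)^d
          * (univ.filter (fun w : Fin n → Fin 3 => cnt3 n w 1 = m')).card) := by
  set A := univ.filter (fun w : Fin n → Fin 3 => cnt3 n w 1 = m') with hA
  set x : ℝ := ((n - m' : ℕ):ℝ) with hx
  have hx0 : (0:ℝ) ≤ x := Nat.cast_nonneg _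
  have hc0 : (0:ℝ) ≤ (A.card : ℝ) := Nat.cast_nonneg _
  have step1 : ∑ k ∈ range (d+1), (Nat.choose (2*d) (2*k) : ℝ)
        * ∑ w ∈ A, (∑ j, sgn3 (w j))^(2*k)
      ≤ ∑ k ∈ range (d+1), (Nat.choose (2*d) (2*k) : ℝ) * (2^k * (Nat.factorial k : ℝ)
          * x^k * A.card) := by
    refine Finset.sum_le_sum fun k hk => ?_
    exact mul_le_mul_of_nonneg_left (ih k (Nat.lt_succ_iff.mp (mem_range.mp hk)))
      (Nat.cast_nonneg _)
  have step2 : ∑ k ∈ range (d+1), (Nat.choose (2*d) (2*k) : ℝ) * (2^k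
          * (Nat.factorial k : ℝ) * x^k * A.card)
      ≤ ∑ k ∈ range (d+1), (2^d * (Nat.factorial d : ℝ) * (Nat.choose d k : ℝ))
          * (x^k * A.card) := by
    refine Finset.sum_le_sum fun k hk => ?_
    have hkd : k ≤ d := Nat.lt_succ_iff.mp (mem_range.mp hk)
    have hnk : (Nat.choose (2*d) (2*k) : ℝ) * 2^k * (Nat.factorial k : ℝ)
        ≤ 2^d * (Nat.factorial d : ℝ) * (Nat.choose d k : ℝ) := by
      exact_mod_cast nk d k hkd
    calc (Nat.choose (2*d) (2*k) : ℝ) * (2^k * (Nat.factorial k : ℝ) * x^k * A.card)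
        = ((Nat.choose (2*d) (2*k) : ℝ) * 2^k * (Nat.factorial k : ℝ)) * (x^k * A.card) := by
          ring
      _ ≤ (2^d * (Nat.factorial d : ℝ) * (Nat.choose d k : ℝ)) * (x^k * A.card) :=
          mul_le_mul_of_nonneg_right hnk (by positivity)
  have heq : ∑ k ∈ range (d+1), (2^d * (Nat.factorial d : ℝ) * (Nat.choose d k : ℝ))
          * (x^k * A.card)
      = 2^d * (Nat.factorial d : ℝ) * (x + 1)^d * A.card := by
    have hpow : (x + 1)^d = ∑ k ∈ range (d+1), x^k * 1^(d-k) * (Nat.choose d k : ℝ) :=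
      add_pow x 1 d
    rw [hpow, Finset.mul_sum, Finset.sum_mul]
    refine Finset.sum_congr rfl fun k _ => ?_
    simp; ring
  calc 2 * ∑ k ∈ range (d+1), (Nat.choose (2*d) (2*k) : ℝ)
        * ∑ w ∈ A, (∑ j, sgn3 (w j))^(2*k)
      ≤ 2 * ∑ k ∈ range (d+1), (2^d * (Nat.factorial d : ℝ) * (Nat.choose d k : ℝ))
          * (x^k * A.card) := by linarith [step1.trans step2]
    _ = 2 * (2^d * (Nat.factorial d : ℝ) * (x + 1)^d * A.card) := by rw [heq]

lemma cnt3_le (n : ℕ) (v : Fin n → Fin 3) (k : Fin 3) : cnt3 n v k ≤ n := by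
  unfold cnt3
  simpa using Finset.card_filter_le (univ : Finset (Fin n)) _

lemma card_decomp (n m : ℕ) :
    (((univ.filter (fun v : Fin (n+1) → Fin 3 => cnt3 (n+1) v 1 = m)).card : ℝ))
      = 2 * ((univ.filter (fun w : Fin n → Fin 3 => cnt3 n w 1 = m)).card : ℝ)
        + ((univ.filter (fun w : Fin n → Fin 3 => 1 + cnt3 n w 1 = m)).card : ℝ) := by
  have h := decomp3 n m (fun _ => (1:ℝ))
  simp only [Finset.sum_const, nsmul_eq_mul] at h
  rw [show ((1:ℝ) + 1) = 2 by norm_num] at h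
  linarith [h]

lemma key3 (n : ℕ) : ∀ d m : ℕ,
    ∑ v ∈ univ.filter (fun v : Fin n → Fin 3 => cnt3 n v 1 = m), (∑ j, sgn3 (v j)) ^ (2*d)
      ≤ 2^d * (Nat.factorial d : ℝ) * ((n - m : ℕ) : ℝ)^d *
          (univ.filter (fun v : Fin n → Fin 3 => cnt3 n v 1 = m)).card := by
  induction n with
  | zero =>
    intro d m
    by_cases hm : m = 0
    · subst hm
      have hfil : univ.filter (fun v : Fin 0 → Fin 3 => cnt3 0 v 1 = 0) = univ := by
        refine Finset.filter_true_of_mem fun v _ => ?_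
        simp [cnt3]
      rw [hfil]
      have hS : ∀ v : Fin 0 → Fin 3, (∑ j, sgn3 (v j)) = 0 := fun v => by simp
      cases d with
      | zero => simp [hS]
      | succ e =>
        have h2 : 2*(e+1) ≠ 0 := by omega
        simp [hS, zero_pow h2, zero_pow (show e+1 ≠ 0 by omega)]
    · have hfil : univ.filter (fun v : Fin 0 → Fin 3 => cnt3 0 v 1 = m) = ∅ := by
        refine Finset.filter_false_of_mem fun v _ => ?_
        simp [cnt3]
        omega
      rw [hfil]; simp
  | succ n ih =>
    intro d m
    rw [decomp3 n m (fun v => (∑ j, sgn3 (v j)) ^ (2*d))]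
    have hc0 : ∀ w : Fin n → Fin 3, (∑ j, sgn3 ((Fin.cons 0 w : Fin (n+1) → Fin 3) j))
        = (∑ j, sgn3 (w j)) + 1 := by
      intro w; rw [sgn3_cons]; simp [sgn3]; ring
    have hc2 : ∀ w : Fin n → Fin 3, (∑ j, sgn3 ((Fin.cons 2 w : Fin (n+1) → Fin 3) j))
        = (∑ j, sgn3 (w j)) - 1 := by
      intro w; rw [sgn3_cons]; simp [sgn3]; ring
    have hc1 : ∀ w : Fin n → Fin 3, (∑ j, sgn3 ((Fin.cons 1 w : Fin (n+1) → Fin 3) j))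
        = (∑ j, sgn3 (w j)) := by
      intro w; rw [sgn3_cons]; simp [sgn3]
    simp only [hc0, hc1, hc2]
    rw [pairsum n d (univ.filter (fun w : Fin n → Fin 3 => cnt3 n w 1 = m))]
    have hT1 := term1_bound n d m (fun k _ => ih k m)
    cases m with
    | zero =>
      have hfil : univ.filter (fun w : Fin n → Fin 3 => 1 + cnt3 n w 1 = 0) = ∅ := by
        refine Finset.filter_false_of_mem fun w _ => ?_
        omega
      rw [hfil, Finset.sum_empty, add_zero]
      have hcard := card_decomp n 0
      rw [hfil] at hcard
      simp only [Finset.card_empty, Nat.cast_zero, add_zero] at hcard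
      have hcast : (((n:ℕ) - 0 : ℕ) : ℝ) + 1 = (((n+1) - 0 : ℕ) : ℝ) := by
        simp
      rw [hcast] at hT1
      rw [hcard] at *
      calc 2 * ∑ k ∈ range (d+1), (Nat.choose (2*d) (2*k) : ℝ)
            * ∑ w ∈ univ.filter (fun w : Fin n → Fin 3 => cnt3 n w 1 = 0),
                (∑ j, sgn3 (w j))^(2*k)
          ≤ 2 * (2^d * (Nat.factorial d : ℝ) * (((n+1) - 0 : ℕ) : ℝ)^d
              * ((univ.filter (fun w : Fin n → Fin 3 => cnt3 n w 1 = 0)).card : ℝ)) := hT1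
        _ = 2^d * (Nat.factorial d : ℝ) * (((n+1) - 0 : ℕ) : ℝ)^d
              * (2 * ((univ.filter (fun w : Fin n → Fin 3 => cnt3 n w 1 = 0)).card : ℝ)) := by
            ring
    | succ k =>
      have hfil : univ.filter (fun w : Fin n → Fin 3 => 1 + cnt3 n w 1 = k + 1)
          = univ.filter (fun w : Fin n → Fin 3 => cnt3 n w 1 = k) := by
        apply Finset.filter_congr
        intro w _
        constructor <;> (intro h; omega)
      rw [hfil]
      have hT2 := ih d k
      have hcard := card_decomp n (k+1)
      rw [hfil] at hcard
      have hE1 : ((((n:ℕ) - (k+1) : ℕ) : ℝ) + 1)^d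
            * ((univ.filter (fun w : Fin n → Fin 3 => cnt3 n w 1 = k+1)).card : ℝ)
          = (((n:ℕ) - k : ℕ) : ℝ)^d
            * ((univ.filter (fun w : Fin n → Fin 3 => cnt3 n w 1 = k+1)).card : ℝ) := by
        by_cases hemp : (univ.filter (fun w : Fin n → Fin 3 => cnt3 n w 1 = k+1)).card = 0
        · rw [hemp]; simp
        · obtain ⟨w, hw⟩ := Finset.card_ne_zero.mp hemp
          have hwm : cnt3 n w 1 = k + 1 := (Finset.mem_filter.mp hw).2
          have hkn : k + 1 ≤ n := hwm ▸ cnt3_le n w 1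
          have : ((n - (k+1) : ℕ) : ℝ) + 1 = ((n - k : ℕ) : ℝ) := by
            exact_mod_cast congrArg (Nat.cast (R := ℝ)) (show (n - (k+1)) + 1 = n - k by omega)
          rw [this]
      have hE2 : (n + 1) - (k + 1) = n - k := by omega
      rw [hE2]
      have hfac : (0:ℝ) ≤ 2^d * (Nat.factorial d : ℝ) := by positivity
      calc 2 * ∑ kk ∈ range (d+1), (Nat.choose (2*d) (2*kk) : ℝ)
            * ∑ w ∈ univ.filter (fun w : Fin n → Fin 3 => cnt3 n w 1 = k+1),
                (∑ j, sgn3 (w j))^(2*kk)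
            + ∑ w ∈ univ.filter (fun w : Fin n → Fin 3 => cnt3 n w 1 = k),
                (∑ j, sgn3 (w j))^(2*d)
          ≤ 2 * (2^d * (Nat.factorial d : ℝ) * ((((n:ℕ) - (k+1) : ℕ) : ℝ) + 1)^d
              * ((univ.filter (fun w : Fin n → Fin 3 => cnt3 n w 1 = k+1)).card : ℝ))
            + 2^d * (Nat.factorial d : ℝ) * (((n:ℕ) - k : ℕ) : ℝ)^d
              * ((univ.filter (fun w : Fin n → Fin 3 => cnt3 n w 1 = k)).card : ℝ) := by
            exact add_le_add (term1_bound n d (k+1) (fun kk _ => ih kk (k+1))) hT2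
        _ = 2^d * (Nat.factorial d : ℝ) * (((n:ℕ) - k : ℕ) : ℝ)^d
              * (2 * ((univ.filter (fun w : Fin n → Fin 3 => cnt3 n w 1 = k+1)).card : ℝ)
                + ((univ.filter (fun w : Fin n → Fin 3 => cnt3 n w 1 = k)).card : ℝ)) := by
            rw [show 2 * (2^d * (Nat.factorial d : ℝ) * ((((n:ℕ) - (k+1) : ℕ) : ℝ) + 1)^d
                * ((univ.filter (fun w : Fin n → Fin 3 => cnt3 n w 1 = k+1)).card : ℝ))
              = 2 * (2^d * (Nat.factorial d : ℝ)
                * (((((n:ℕ) - (k+1) : ℕ) : ℝ) + 1)^d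
                  * ((univ.filter (fun w : Fin n → Fin 3 => cnt3 n w 1 = k+1)).card : ℝ))) by ring,
              hE1]
            ring
        _ = 2^d * (Nat.factorial d : ℝ) * (((n:ℕ) - k : ℕ) : ℝ)^d
              * ((univ.filter (fun v : Fin (n+1) → Fin 3 => cnt3 (n+1) v 1 = k+1)).card : ℝ) := by
            rw [hcard]

lemma Ssum (n : ℕ) (v : Fin n → Fin 3) :
    ((cnt3 n v 0 : ℝ) - (cnt3 n v 2 : ℝ)) = ∑ j, sgn3 (v j) := by
  unfold cnt3
  rw [Finset.card_filter, Finset.card_filter]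
  push_cast
  rw [← Finset.sum_sub_distrib]
  refine Finset.sum_congr rfl fun j _ => ?_
  generalize v j = a
  fin_cases a <;> norm_num [sgn3, Fin.ext_iff]

lemma final_sum (n d : ℕ) (t : Set ℕ) [DecidablePred (· ∈ t)] :
    ∑ v ∈ univ.filter (fun v : Fin n → Fin 3 => cnt3 n v 1 ∈ t),
        ((cnt3 n v 0 : ℝ) - (cnt3 n v 2 : ℝ)) ^ (2*d)
      ≤ ∑ v ∈ univ.filter (fun v : Fin n → Fin 3 => cnt3 n v 1 ∈ t),
          (2:ℝ)^d * (Nat.factorial d : ℝ) * ((n : ℝ) - (cnt3 n v 1 : ℝ))^d := by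
  classical
  have hmaps : ∀ v ∈ univ.filter (fun v : Fin n → Fin 3 => cnt3 n v 1 ∈ t),
      cnt3 n v 1 ∈ Finset.range (n+1) :=
    fun v _ => Finset.mem_range.mpr (Nat.lt_succ_of_le (cnt3_le n v 1))
  rw [← Finset.sum_fiberwise_of_maps_to hmaps
      (fun v => ((cnt3 n v 0 : ℝ) - (cnt3 n v 2 : ℝ)) ^ (2*d)),
    ← Finset.sum_fiberwise_of_maps_to hmaps
      (fun v => (2:ℝ)^d * (Nat.factorial d : ℝ) * ((n : ℝ) - (cnt3 n v 1 : ℝ))^d)]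
  refine Finset.sum_le_sum fun m _ => ?_
  have hfil : (univ.filter (fun v : Fin n → Fin 3 => cnt3 n v 1 ∈ t)).filter
        (fun v => cnt3 n v 1 = m)
      = if m ∈ t then univ.filter (fun v : Fin n → Fin 3 => cnt3 n v 1 = m) else ∅ := by
    ext v
    simp only [Finset.mem_filter, Finset.mem_univ, true_and]
    by_cases hmt : m ∈ t
    · rw [if_pos hmt]
      simp only [Finset.mem_filter, Finset.mem_univ, true_and]
      constructor
      · rintro ⟨-, h⟩; exact h
      · intro h; exact ⟨h ▸ hmt, h⟩
    · rw [if_neg hmt]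
      simp only [Finset.notMem_empty, iff_false, not_and]
      intro h1 h2; exact hmt (h2 ▸ h1)
  rw [hfil]
  by_cases hmt : m ∈ t
  · rw [if_pos hmt]
    have hYconst : ∀ v ∈ univ.filter (fun v : Fin n → Fin 3 => cnt3 n v 1 = m),
        (2:ℝ)^d * (Nat.factorial d : ℝ) * ((n : ℝ) - (cnt3 n v 1 : ℝ))^d
          = (2:ℝ)^d * (Nat.factorial d : ℝ) * ((n - m : ℕ) : ℝ)^d := by
      intro v hv
      have h1 : cnt3 n v 1 = m := (Finset.mem_filter.mp hv).2
      have h2 : m ≤ n := h1 ▸ cnt3_le n v 1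
      rw [h1, Nat.cast_sub h2]
    rw [Finset.sum_congr rfl hYconst, Finset.sum_const, nsmul_eq_mul]
    have hXr : ∀ v ∈ univ.filter (fun v : Fin n → Fin 3 => cnt3 n v 1 = m),
        ((cnt3 n v 0 : ℝ) - (cnt3 n v 2 : ℝ)) ^ (2*d) = (∑ j, sgn3 (v j)) ^ (2*d) :=
      fun v _ => by rw [Ssum]
    rw [Finset.sum_congr rfl hXr]
    calc ∑ v ∈ univ.filter (fun v : Fin n → Fin 3 => cnt3 n v 1 = m), (∑ j, sgn3 (v j)) ^ (2*d)
        ≤ 2^d * (Nat.factorial d : ℝ) * ((n - m : ℕ) : ℝ)^d *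
            (univ.filter (fun v : Fin n → Fin 3 => cnt3 n v 1 = m)).card := key3 n d m
      _ = ((univ.filter (fun v : Fin n → Fin 3 => cnt3 n v 1 = m)).card : ℝ)
            * (2^d * (Nat.factorial d : ℝ) * ((n - m : ℕ) : ℝ)^d) := by ring
  · rw [if_neg hmt]
    simp

open MeasureTheory in
lemma pi_singleton (n : ℕ) (μ3 : Measure (Fin 3)) [MeasureTheory.IsProbabilityMeasure μ3]
    (hμ3 : ∀ k, μ3 {k} = 1/3) (v : Fin n → Fin 3) :
    (MeasureTheory.Measure.pi fun _ => μ3) {v} = (1/3 : ENNReal)^n := by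
  rw [← Set.univ_pi_singleton, MeasureTheory.Measure.pi_pi]
  simp [hμ3]

open MeasureTheory in
lemma setIntegral_pi3 (n : ℕ) (μ3 : Measure (Fin 3)) [MeasureTheory.IsProbabilityMeasure μ3]
    (hμ3 : ∀ k, μ3 {k} = 1/3) (s : Set (Fin n → Fin 3)) [DecidablePred (· ∈ s)]
    (F : (Fin n → Fin 3) → ℝ) :
    ∫ x in s, F x ∂(MeasureTheory.Measure.pi fun _ => μ3)
      = (1/3 : ℝ)^n * ∑ v ∈ univ.filter (· ∈ s), F v := by
  rw [MeasureTheory.integral_fintype (MeasureTheory.Integrable.of_finite)]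
  simp only [MeasureTheory.measureReal_def]
  have hv : ∀ v : Fin n → Fin 3,
      ((MeasureTheory.Measure.pi fun _ => μ3).restrict s) {v}
        = if v ∈ s then (1/3 : ENNReal)^n else 0 := by
    intro v
    rw [MeasureTheory.Measure.restrict_apply (measurableSet_singleton v)]
    by_cases hvs : v ∈ s
    · rw [Set.inter_eq_self_of_subset_left (Set.singleton_subset_iff.mpr hvs),
        pi_singleton n μ3 hμ3 v, if_pos hvs]
    · have : {v} ∩ s = ∅ := by
        ext x; simp only [Set.mem_inter_iff, Set.mem_singleton_iff, Set.mem_empty_iff_false,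
          iff_false, not_and]
        rintro rfl; exact hvs
      rw [this, if_neg hvs]; simp
  have hterm : ∀ v : Fin n → Fin 3,
      (((MeasureTheory.Measure.pi fun _ => μ3).restrict s) {v}).toReal • F v
        = if v ∈ s then (1/3:ℝ)^n * F v else 0 := by
    intro v
    rw [hv v]
    by_cases hvs : v ∈ s
    · rw [if_pos hvs, if_pos hvs]
      simp [smul_eq_mul, ENNReal.toReal_pow]
    · rw [if_neg hvs, if_neg hvs]; simp
  rw [Finset.sum_congr rfl (fun v _ => hterm v), ← Finset.sum_filter, Finset.mul_sum]

open MeasureTheory in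
/-- **Conditional moment bound for multinomial counts.** For `u₁,…,u_n` i.i.d.
uniform on `{0,1,2}` with counts `N_k`, almost surely
`E[(N₀ − N₂)^{2d} | N₁] ≤ 2^d · d! · (n − N₁)^d`. -/
theorem stmt10 (n d : ℕ)
    (μ3 : Measure (Fin 3)) [IsProbabilityMeasure μ3]
    (hμ3 : ∀ k, μ3 {k} = 1 / 3)
    (μ : Measure (Fin n → Fin 3)) (hμ : μ = Measure.pi fun _ => μ3) :
    ∀ᵐ u ∂μ,
      (μ[fun v => ((cnt3 n v 0 : ℝ) - (cnt3 n v 2 : ℝ)) ^ (2 * d) |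
          MeasurableSpace.comap (fun v => cnt3 n v 1) ⊤]) u
        ≤ 2 ^ d * (d.factorial : ℝ) * ((n : ℝ) - (cnt3 n u 1 : ℝ)) ^ d := by
  classical
  subst hμ
  set X : (Fin n → Fin 3) → ℝ :=
    fun v => ((cnt3 n v 0 : ℝ) - (cnt3 n v 2 : ℝ)) ^ (2 * d) with hXdef
  set Y : (Fin n → Fin 3) → ℝ :=
    fun v => 2 ^ d * (d.factorial : ℝ) * ((n : ℝ) - (cnt3 n v 1 : ℝ)) ^ d with hYdef
  have hm : MeasurableSpace.comap (fun v : Fin n → Fin 3 => cnt3 n v 1) ⊤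
      ≤ MeasurableSpace.pi := by
    rintro s ⟨t, -, rfl⟩
    exact measurable_of_countable (fun v : Fin n → Fin 3 => cnt3 n v 1)
      (MeasurableSpace.measurableSet_top)
  have hX : Integrable X (Measure.pi fun _ => μ3) := .of_finite
  have hY : Integrable Y (Measure.pi fun _ => μ3) := .of_finite
  have hfm : Measurable[MeasurableSpace.comap (fun v : Fin n → Fin 3 => cnt3 n v 1) ⊤]
      (fun v : Fin n → Fin 3 => cnt3 n v 1) := by
    intro t ht
    exact ⟨t, MeasurableSpace.measurableSet_top, rfl⟩
  have hYm : StronglyMeasurable[MeasurableSpace.comap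
      (fun v : Fin n → Fin 3 => cnt3 n v 1) ⊤] Y := by
    have hg : Measurable (fun c : ℕ => (2:ℝ) ^ d * (d.factorial : ℝ) * ((n : ℝ) - (c : ℝ)) ^ d) :=
      measurable_of_countable _
    exact (hg.comp hfm).stronglyMeasurable
  have hle : ((Measure.pi fun _ => μ3)[X|MeasurableSpace.comap
        (fun v : Fin n → Fin 3 => cnt3 n v 1) ⊤])
      ≤ᵐ[(Measure.pi fun _ => μ3).trim hm] Y := by
    refine ae_le_of_forall_setIntegral_le
      (Integrable.trim hm integrable_condExp stronglyMeasurable_condExp)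
      (Integrable.trim hm hY hYm) ?_
    intro s hs _
    rw [← setIntegral_trim hm stronglyMeasurable_condExp hs,
      ← setIntegral_trim hm hYm hs,
      setIntegral_condExp hm hX hs]
    obtain ⟨t, -, rfl⟩ := hs
    rw [setIntegral_pi3 n μ3 hμ3 _ X, setIntegral_pi3 n μ3 hμ3 _ Y]
    refine mul_le_mul_of_nonneg_left ?_ (by positivity)
    have hSet : (univ.filter (· ∈ (fun v : Fin n → Fin 3 => cnt3 n v 1) ⁻¹' t))
        = univ.filter (fun v : Fin n → Fin 3 => cnt3 n v 1 ∈ t) := by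
      apply Finset.filter_congr
      intro v _
      simp [Set.mem_preimage]
    rw [hSet]
    exact final_sum n d t
  have hfinal := ae_le_of_ae_le_trim hle
  filter_upwards [hfinal] with u hu
  exact hu
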